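/- Let X be a real Banach space with dual X*, let n ≥ 1 be an integer, and let q_1, …, q_n ∈ X and σ_1, …, σ_n ∈ X* satisfy σ_i(q_i) = 1 for every i ∈ {1, …, n} and σ_j(q_i) = 0 whenever 1 ≤ j < i ≤ n. Define operators J_0, J_1, …, J_n : X → X recursively by J_0[w] := 0 and J_t[w] := J_{t−1}[w] + σ_t(w − J_{t−1}[w]) q_t for t ∈ {1, …, n}. Then for every w ∈ X and every j ∈ {1, …, n}, one has σ_j(w − J_n[w]) = 0. -/

import Mathlib

/-- The GEIM interpolation operators interpolate exactly on the selected functionals. -/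
theorem GEIM_interpolation
    {X : Type*} [NormedAddCommGroup X] [NormedSpace ℝ X] [CompleteSpace X]
    (n : ℕ) (hn : 1 ≤ n)
    (q : Fin n → X) (σ : Fin n → StrongDual ℝ X)
    (hdiag : ∀ i, σ i (q i) = 1)
    (htri : ∀ i j : Fin n, j < i → σ j (q i) = 0)
    (J : ℕ → X → X)
    (hJ0 : ∀ w, J 0 w = 0)
    (hJrec : ∀ t : Fin n, ∀ w, J (t.1 + 1) w = J t.1 w + (σ t (w - J t.1 w)) • q t) :
    ∀ w : X, ∀ j : Fin n, σ j (w - J n w) = 0 := by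
  intro w j
  have key : ∀ t : ℕ, j.1 < t → t ≤ n → σ j (w - J t w) = 0 := by
    intro t
    induction t with
    | zero => omega
    | succ t ih =>
      intro hjt htn
      have ht : t < n := by omega
      have hrec := hJrec ⟨t, ht⟩ w
      simp only at hrec
      rw [hrec]
      have heq : w - (J t w + (σ ⟨t,ht⟩ (w - J t w)) • q ⟨t,ht⟩)
          = (w - J t w) - (σ ⟨t,ht⟩ (w - J t w)) • q ⟨t,ht⟩ := by abel
      rw [heq, map_sub, map_smul]
      rcases Nat.lt_or_ge j.1 t with h | h
      · rw [ih h (by omega)]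
        have hz : σ j (q ⟨t,ht⟩) = 0 := htri ⟨t,ht⟩ j h
        simp [hz]
      · have hjeq : j = ⟨t, ht⟩ := by apply Fin.ext; simp only [Fin.val_mk]; omega
        subst hjeq
        simp [hdiag]
  exact key n j.2 le_rfl
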